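/- Let d ≥ 1, let Ω ⊆ ℝ^d be a nonempty bounded open set, let ε > 0, δ ≥ 0, and 0 < k ≤ ε² + δ, and fix w ∈ V. Then the functional E(u) = ∫_Ω ( (1/2)|∇u(x)|² + (1/ε²)F(u(x)) ) dx + (1/(2k) + δ/(2kε²)) ∫_Ω (u(x) − w(x))² dx is strictly convex on V: for all u₁, u₂ ∈ V whose restrictions to Ω are not equal and all t ∈ (0,1), E(t u₁ + (1−t) u₂) < t E(u₁) + (1−t) E(u₂). -/

import Mathlib

open MeasureTheory RealInnerProductSpace

lemma normsq_combo {E : Type*} [NormedAddCommGroup E] [InnerProductSpace ℝ E]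
    (a b : E) (t : ℝ) (ht0 : 0 ≤ t) (ht1 : t ≤ 1) :
    ‖t • a + (1 - t) • b‖ ^ 2 ≤ t * ‖a‖ ^ 2 + (1 - t) * ‖b‖ ^ 2 := by
  have h := @norm_add_sq_real E _ _ (t • a) ((1 - t) • b)
  rw [norm_smul, norm_smul, real_inner_smul_left, real_inner_smul_right,
    Real.norm_eq_abs, Real.norm_eq_abs, abs_of_nonneg ht0,
    abs_of_nonneg (by linarith : (0:ℝ) ≤ 1 - t)] at h
  have hab : ⟪a, b⟫ ≤ ‖a‖ * ‖b‖ := real_inner_le_norm a b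
  nlinarith [sq_nonneg (‖a‖ - ‖b‖), mul_nonneg ht0 (by linarith : (0:ℝ) ≤ 1 - t)]

lemma pot_le (ε c a b wx t : ℝ) (hε : 0 < ε) (hc : 1/(2*ε^2) ≤ c)
    (ht0 : 0 ≤ t) (ht1 : t ≤ 1) :
    1/ε^2 * (1/4*((t*a+(1-t)*b)^2-1)^2) + c*((t*a+(1-t)*b) - wx)^2 ≤
      t*(1/ε^2 * (1/4*(a^2-1)^2) + c*(a-wx)^2)
      + (1-t)*(1/ε^2 * (1/4*(b^2-1)^2) + c*(b-wx)^2) := by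
  have h4 : (t*a+(1-t)*b)^4 ≤ t*a^4 + (1-t)*b^4 := by
    have := (Even.convexOn_pow (𝕜 := ℝ) (n := 4) (by decide)).2
      (Set.mem_univ a) (Set.mem_univ b) ht0 (by linarith : (0:ℝ) ≤ 1 - t) (by ring)
    simpa [smul_eq_mul] using this
  have hY : t*a^2+(1-t)*b^2 - (t*a+(1-t)*b)^2 = t*(1-t)*(a-b)^2 := by ring
  have hYn : 0 ≤ t*(1-t)*(a-b)^2 := mul_nonneg (mul_nonneg (by linarith) (by linarith)) (sq_nonneg _)
  have hε2 : (0:ℝ) < ε^2 := by positivity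
  have key : (t*(1/ε^2 * (1/4*(a^2-1)^2) + c*(a-wx)^2)
      + (1-t)*(1/ε^2 * (1/4*(b^2-1)^2) + c*(b-wx)^2))
      - (1/ε^2 * (1/4*((t*a+(1-t)*b)^2-1)^2) + c*((t*a+(1-t)*b) - wx)^2)
      = 1/(4*ε^2) * (t*a^4 + (1-t)*b^4 - (t*a+(1-t)*b)^4)
        + (c - 1/(2*ε^2)) * (t*a^2+(1-t)*b^2 - (t*a+(1-t)*b)^2) := by
    field_simp
    ring
  nlinarith [mul_nonneg (by linarith : (0:ℝ) ≤ c - 1/(2*ε^2)) hYn,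
    mul_nonneg (by positivity : (0:ℝ) ≤ 1/(4*ε^2)) (by linarith : (0:ℝ) ≤ t*a^4 + (1-t)*b^4 - (t*a+(1-t)*b)^4)]

lemma pot_lt (ε c a b wx t : ℝ) (hε : 0 < ε) (hc : 1/(2*ε^2) ≤ c)
    (ht0 : 0 < t) (ht1 : t < 1) (hab : a ≠ b) :
    1/ε^2 * (1/4*((t*a+(1-t)*b)^2-1)^2) + c*((t*a+(1-t)*b) - wx)^2 <
      t*(1/ε^2 * (1/4*(a^2-1)^2) + c*(a-wx)^2)
      + (1-t)*(1/ε^2 * (1/4*(b^2-1)^2) + c*(b-wx)^2) := by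
  have h4 : (t*a+(1-t)*b)^4 < t*a^4 + (1-t)*b^4 := by
    have := (Even.strictConvexOn_pow (n := 4) (by decide) (by norm_num)).2
      (Set.mem_univ a) (Set.mem_univ b) hab ht0 (by linarith : (0:ℝ) < 1 - t) (by ring)
    simpa [smul_eq_mul] using this
  have hYn : 0 ≤ t*(1-t)*(a-b)^2 := mul_nonneg (mul_nonneg (by linarith) (by linarith)) (sq_nonneg _)
  have hε2 : (0:ℝ) < ε^2 := by positivity
  have key : (t*(1/ε^2 * (1/4*(a^2-1)^2) + c*(a-wx)^2)
      + (1-t)*(1/ε^2 * (1/4*(b^2-1)^2) + c*(b-wx)^2))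
      - (1/ε^2 * (1/4*((t*a+(1-t)*b)^2-1)^2) + c*((t*a+(1-t)*b) - wx)^2)
      = 1/(4*ε^2) * (t*a^4 + (1-t)*b^4 - (t*a+(1-t)*b)^4)
        + (c - 1/(2*ε^2)) * (t*(1-t)*(a-b)^2) := by
    field_simp
    ring
  nlinarith [mul_nonneg (by linarith : (0:ℝ) ≤ c - 1/(2*ε^2)) hYn,
    mul_pos (by positivity : (0:ℝ) < 1/(4*ε^2)) (by linarith : (0:ℝ) < t*a^4 + (1-t)*b^4 - (t*a+(1-t)*b)^4)]

open Set

set_option maxHeartbeats 1000000 in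
theorem stmt_7 (d : ℕ) (hd : 1 ≤ d)
    (Ω : Set (EuclideanSpace ℝ (Fin d))) (hΩne : Ω.Nonempty)
    (hΩbd : Bornology.IsBounded Ω) (hΩop : IsOpen Ω)
    (ε k δ : ℝ) (hε : 0 < ε) (hδ : 0 ≤ δ) (hk0 : 0 < k) (hk : k ≤ ε ^ 2 + δ)
    (w : EuclideanSpace ℝ (Fin d) → ℝ) (hw : ContDiff ℝ 1 w)
    (E : (EuclideanSpace ℝ (Fin d) → ℝ) → ℝ)
    (hE : ∀ u, E u = (∫ x in Ω,
      (1 / 2 * ‖gradient u x‖ ^ 2 + 1 / ε ^ 2 * (1 / 4 * ((u x) ^ 2 - 1) ^ 2)))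
      + (1 / (2 * k) + δ / (2 * k * ε ^ 2)) * ∫ x in Ω, (u x - w x) ^ 2)
    (u₁ u₂ : EuclideanSpace ℝ (Fin d) → ℝ)
    (hu₁ : ContDiff ℝ 1 u₁) (hu₂ : ContDiff ℝ 1 u₂)
    (hne : ¬ Set.EqOn u₁ u₂ Ω)
    (t : ℝ) (ht : t ∈ Set.Ioo (0 : ℝ) 1) :
    E (fun x => t * u₁ x + (1 - t) * u₂ x) < t * E u₁ + (1 - t) * E u₂ := by
  obtain ⟨ht0, ht1⟩ := ht
  set c : ℝ := 1 / (2 * k) + δ / (2 * k * ε ^ 2) with hcdef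
  have hε2 : (0:ℝ) < ε ^ 2 := by positivity
  have hc : 1 / (2 * ε ^ 2) ≤ c := by
    have hceq : c = (ε ^ 2 + δ) / (2 * k * ε ^ 2) := by
      rw [hcdef]
      field_simp
    rw [hceq, div_le_div_iff₀ (by positivity) (by positivity)]
    nlinarith
  set ut : EuclideanSpace ℝ (Fin d) → ℝ := fun x => t * u₁ x + (1 - t) * u₂ x with hutdef
  have hut : ContDiff ℝ 1 ut := (contDiff_const.mul hu₁).add (contDiff_const.mul hu₂)
  -- integrability helper
  have intOn : ∀ f : EuclideanSpace ℝ (Fin d) → ℝ, Continuous f → IntegrableOn f Ω := fun f hf =>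
    (hf.continuousOn.integrableOn_compact hΩbd.isCompact_closure).mono_set subset_closure
  have contGrad : ∀ u : EuclideanSpace ℝ (Fin d) → ℝ, ContDiff ℝ 1 u →
      Continuous (fun x => gradient u x) :=
    fun u hu => (InnerProductSpace.toDual ℝ _).symm.continuous.comp (hu.continuous_fderiv one_ne_zero)
  -- the combined integrand
  set I : (EuclideanSpace ℝ (Fin d) → ℝ) → EuclideanSpace ℝ (Fin d) → ℝ := fun u x =>
    1 / 2 * ‖gradient u x‖ ^ 2 + 1 / ε ^ 2 * (1 / 4 * ((u x) ^ 2 - 1) ^ 2)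
      + c * (u x - w x) ^ 2 with hIdef
  have contA : ∀ u : EuclideanSpace ℝ (Fin d) → ℝ, ContDiff ℝ 1 u →
      Continuous (fun x => 1 / 2 * ‖gradient u x‖ ^ 2
        + 1 / ε ^ 2 * (1 / 4 * ((u x) ^ 2 - 1) ^ 2)) := by
    intro u hu
    exact (continuous_const.mul (((contGrad u hu).norm).pow 2)).add
      (continuous_const.mul (continuous_const.mul
        (((hu.continuous.pow 2).sub continuous_const).pow 2)))
  have contB : ∀ u : EuclideanSpace ℝ (Fin d) → ℝ, ContDiff ℝ 1 u →
      Continuous (fun x => (u x - w x) ^ 2) := fun u hu =>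
    ((hu.continuous.sub hw.continuous).pow 2)
  have contI : ∀ u : EuclideanSpace ℝ (Fin d) → ℝ, ContDiff ℝ 1 u → Continuous (I u) := fun u hu =>
    (contA u hu).add (continuous_const.mul (contB u hu))
  have hEI : ∀ u : EuclideanSpace ℝ (Fin d) → ℝ, ContDiff ℝ 1 u → E u = ∫ x in Ω, I u x := by
    intro u hu
    rw [hE u, ← integral_const_mul, ← integral_add (intOn _ (contA u hu))
      ((intOn _ (contB u hu)).const_mul c)]
  -- gradient of the convex combination
  have hgrad : ∀ x, gradient ut x = t • gradient u₁ x + (1 - t) • gradient u₂ x := by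
    intro x
    have h1 : HasFDerivAt u₁ (fderiv ℝ u₁ x) x :=
      (hu₁.differentiable one_ne_zero x).hasFDerivAt
    have h2 : HasFDerivAt u₂ (fderiv ℝ u₂ x) x :=
      (hu₂.differentiable one_ne_zero x).hasFDerivAt
    have h : HasFDerivAt ut (t • fderiv ℝ u₁ x + (1 - t) • fderiv ℝ u₂ x) x :=
      (h1.const_mul t).add (h2.const_mul (1 - t))
    rw [h.hasGradientAt.gradient, map_add, _root_.map_smul, _root_.map_smul]
    rfl
  -- pointwise inequalities
  have hpt : ∀ x, I ut x ≤ t * I u₁ x + (1 - t) * I u₂ x := by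
    intro x
    have hn : ‖gradient ut x‖ ^ 2 ≤ t * ‖gradient u₁ x‖ ^ 2 + (1 - t) * ‖gradient u₂ x‖ ^ 2 := by
      rw [hgrad x]
      exact normsq_combo _ _ t ht0.le ht1.le
    have hp := pot_le ε c (u₁ x) (u₂ x) (w x) t hε hc ht0.le ht1.le
    have hux : ut x = t * u₁ x + (1 - t) * u₂ x := rfl
    simp only [hIdef]
    rw [hux]
    linarith [hn, hp]
  have hpts : ∀ x, u₁ x ≠ u₂ x → I ut x < t * I u₁ x + (1 - t) * I u₂ x := by
    intro x hx
    have hn : ‖gradient ut x‖ ^ 2 ≤ t * ‖gradient u₁ x‖ ^ 2 + (1 - t) * ‖gradient u₂ x‖ ^ 2 := by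
      rw [hgrad x]
      exact normsq_combo _ _ t ht0.le ht1.le
    have hp := pot_lt ε c (u₁ x) (u₂ x) (w x) t hε hc ht0 ht1 hx
    have hux : ut x = t * u₁ x + (1 - t) * u₂ x := rfl
    simp only [hIdef]
    rw [hux]
    linarith [hn, hp]
  -- integrabilities
  have hI1 : IntegrableOn (I u₁) Ω := intOn _ (contI u₁ hu₁)
  have hI2 : IntegrableOn (I u₂) Ω := intOn _ (contI u₂ hu₂)
  have hIt : IntegrableOn (I ut) Ω := intOn _ (contI ut hut)
  set h : EuclideanSpace ℝ (Fin d) → ℝ :=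
    fun x => t * I u₁ x + (1 - t) * I u₂ x - I ut x with hhdef
  have hhint : IntegrableOn h Ω := ((hI1.const_mul t).add (hI2.const_mul (1 - t))).sub hIt
  have hpos : 0 < ∫ x in Ω, h x := by
    rw [setIntegral_pos_iff_support_of_nonneg_ae
      (Filter.Eventually.of_forall fun x => sub_nonneg.2 (hpt x)) hhint]
    obtain ⟨x₀, hx₀Ω, hx₀⟩ : ∃ x ∈ Ω, u₁ x ≠ u₂ x := by
      by_contra hcon
      push_neg at hcon
      exact hne fun x hx => hcon x hx
    have hUopen : IsOpen (Ω ∩ {x | u₁ x ≠ u₂ x}) :=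
      hΩop.inter (isOpen_ne_fun hu₁.continuous hu₂.continuous)
    refine lt_of_lt_of_le (hUopen.measure_pos volume ⟨x₀, hx₀Ω, hx₀⟩) (measure_mono ?_)
    rintro x ⟨hxΩ, hxne⟩
    exact ⟨ne_of_gt (sub_pos.2 (hpts x hxne)), hxΩ⟩
  have hsplit : ∫ x in Ω, h x
      = t * (∫ x in Ω, I u₁ x) + (1 - t) * (∫ x in Ω, I u₂ x) - ∫ x in Ω, I ut x := by
    have hadd : IntegrableOn (fun x => t * I u₁ x + (1 - t) * I u₂ x) Ω :=
      (hI1.const_mul t).add (hI2.const_mul (1 - t))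
    simp only [hhdef]
    rw [integral_sub hadd hIt, integral_add (hI1.const_mul t) (hI2.const_mul (1 - t)),
      integral_const_mul, integral_const_mul]
  rw [hEI _ hut, hEI _ hu₁, hEI _ hu₂]
  rw [hsplit] at hpos
  linarith
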